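/- Let X be a metric space, Γ ⊂ X nonempty and closed, g : Γ → ℝ≥0 Lipschitz with constant L_g, and C > 0 with L_g·C < 1. For t₀ ≥ 0 and γ ∈ C(ℝ≥0,X), define τ(t₀,γ) = inf{t ≥ 0 : γ(t+t₀) ∈ Γ} (with inf ∅ = +∞) and J(t₀,γ) = τ(t₀,γ) + g(γ(t₀+τ(t₀,γ))) if τ(t₀,γ) < ∞ and +∞ otherwise. Then J is lower semicontinuous on ℝ≥0 × Lip_C(ℝ≥0,X), where Lip_C denotes curves that are C-Lipschitz and the topology is that of uniform convergence on compact sets. -/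
import Mathlib


open MeasureTheory Filter Topology Set

/-- First exit time after `t₀` of the curve `γ`, valued in `[0,+∞]`. -/
noncomputable def exitTime {X : Type*} [MetricSpace X] (Γ : Set X)
    (γ : C(NNReal, X)) (t₀ : NNReal) : ENNReal :=
  sInf {u : ENNReal | ∃ t : NNReal, u = (t : ENNReal) ∧ γ (t + t₀) ∈ Γ}

/-- The exit cost functional `J(t₀, γ) = τ(t₀,γ) + g(γ(t₀ + τ(t₀,γ)))`, equal to `+∞` when
`γ` never reaches `Γ` after `t₀`. -/
noncomputable def exitCost {X : Type*} [MetricSpace X] (Γ : Set X) (g : X → ℝ)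
    (t₀ : NNReal) (γ : C(NNReal, X)) : ENNReal :=
  if h : exitTime Γ γ t₀ ≠ ⊤ then
    exitTime Γ γ t₀ + ENNReal.ofReal (g (γ (t₀ + (exitTime Γ γ t₀).toNNReal)))
  else ⊤

/-- If the exit time is finite, it is attained: the curve lies in `Γ` at the exit time. -/
lemma exitTime_mem {X : Type*} [MetricSpace X] {Γ : Set X} (hΓ : IsClosed Γ)
    {γ : C(NNReal, X)} {t₀ : NNReal} (h : exitTime Γ γ t₀ ≠ ⊤) :
    γ (t₀ + (exitTime Γ γ t₀).toNNReal) ∈ Γ := by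
  set S : Set NNReal := {t | γ (t + t₀) ∈ Γ} with hSdef
  have hSc : IsClosed S := hΓ.preimage (γ.continuous.comp (continuous_add_right t₀))
  have hSne : S.Nonempty := by
    by_contra hne
    rw [Set.not_nonempty_iff_eq_empty] at hne
    have hempty : {u : ENNReal | ∃ t : NNReal, u = (t : ENNReal) ∧ γ (t + t₀) ∈ Γ} = ∅ := by
      ext u
      simp only [Set.mem_setOf_eq, Set.mem_empty_iff_false, iff_false, not_exists]
      rintro t ⟨rfl, ht⟩
      exact absurd (hne ▸ ht : t ∈ (∅ : Set NNReal)) (Set.notMem_empty t)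
    exact h (by rw [exitTime, hempty, sInf_empty])
  have hm : sInf S ∈ S := hSc.csInf_mem hSne (OrderBot.bddBelow S)
  have heq : exitTime Γ γ t₀ = ((sInf S : NNReal) : ENNReal) := by
    apply le_antisymm
    · exact sInf_le ⟨sInf S, rfl, hm⟩
    · apply le_sInf
      rintro u ⟨t, rfl, ht⟩
      exact_mod_cast csInf_le (OrderBot.bddBelow S) ht
  rw [heq, ENNReal.toNNReal_coe, add_comm]
  exact hm

/-- Extraction lemma: a finite bound on the exit cost gives a finite exit time and the
corresponding sum bound. -/
lemma exitCost_le_aux {X : Type*} [MetricSpace X] {Γ : Set X} {g : X → ℝ}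
    {t₀ : NNReal} {γ : C(NNReal, X)} {b : ENNReal} (hb : b ≠ ⊤)
    (h : exitCost Γ g t₀ γ ≤ b) :
    exitTime Γ γ t₀ ≠ ⊤ ∧
      exitTime Γ γ t₀ + ENNReal.ofReal (g (γ (t₀ + (exitTime Γ γ t₀).toNNReal))) ≤ b := by
  by_cases hτ : exitTime Γ γ t₀ ≠ ⊤
  · refine ⟨hτ, ?_⟩
    rwa [exitCost, dif_pos hτ] at h
  · rw [exitCost, dif_neg hτ] at h
    exact absurd (top_le_iff.1 h) hb

/-- The functional `J(t₀,γ) = τ(t₀,γ) + g(exit point)` is lower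
semicontinuous on `ℝ≥0 × Lip_C(ℝ≥0, X)` whenever `g` is `L_g`-Lipschitz on the nonempty
closed set `Γ` and `L_g · C < 1`. -/
theorem stmt2 {X : Type*} [MetricSpace X] [CompleteSpace X]
    [TopologicalSpace.SeparableSpace X]
    (Γ : Set X) (hΓne : Γ.Nonempty) (hΓ : IsClosed Γ)
    (g : X → ℝ) (Lg : NNReal) (hg : LipschitzOnWith Lg g Γ)
    (hgnonneg : ∀ x ∈ Γ, 0 ≤ g x)
    (C : NNReal) (hC : 0 < C) (hLgC : (Lg : ℝ) * (C : ℝ) < 1) :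
    LowerSemicontinuousOn (fun p : NNReal × C(NNReal, X) => exitCost Γ g p.1 p.2)
      {p : NNReal × C(NNReal, X) | LipschitzWith C p.2} := by
  intro p hp b hb
  by_contra hcon
  rw [Filter.not_eventually] at hcon
  simp only [not_lt] at hcon
  rw [Filter.frequently_iff_neBot] at hcon
  set τq : NNReal × C(NNReal, X) → ENNReal := fun q => exitTime Γ q.2 q.1 with hτqdef
  set l : Filter (NNReal × C(NNReal, X)) :=
    𝓝[{p : NNReal × C(NNReal, X) | LipschitzWith C p.2}] p ⊓
      𝓟 {q | exitCost Γ g q.1 q.2 ≤ b} with hldef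
  haveI hl : l.NeBot := hcon
  have hbtop : b ≠ ⊤ := (hb.trans_le le_top).ne
  have hJle : ∀ᶠ q in l, exitCost Γ g q.1 q.2 ≤ b := Filter.le_principal_iff.1 inf_le_right
  have hτfin : ∀ᶠ q in l, τq q ≠ ⊤ ∧
      τq q + ENNReal.ofReal (g (q.2 (q.1 + (τq q).toNNReal))) ≤ b :=
    hJle.mono fun q hq => exitCost_le_aux hbtop hq
  have hτleb : ∀ᶠ q in l, τq q ≤ b :=
    hτfin.mono fun q hq => le_trans le_self_add hq.2
  -- extract a cluster point of the exit times
  obtain ⟨σ, hσ⟩ := exists_clusterPt_of_compactSpace (Filter.map τq l)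
  have hσb : σ ≤ b := by
    have h1 : ClusterPt σ (𝓟 (Set.Iic b)) :=
      hσ.mono (Filter.le_principal_iff.2 (Filter.mem_map.2 (hτleb.mono fun q hq => hq)))
    have h2 : σ ∈ closure (Set.Iic b) := mem_closure_iff_clusterPt.2 h1
    rwa [isClosed_Iic.closure_eq] at h2
  have hσtop : σ ≠ ⊤ := (hσb.trans_lt (lt_top_iff_ne_top.2 hbtop)).ne
  -- refine the filter so that the exit times converge to σ
  set l' : Filter (NNReal × C(NNReal, X)) := l ⊓ Filter.comap τq (𝓝 σ) with hl'def
  haveI hl' : l'.NeBot := by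
    have h2 : (Filter.map τq l ⊓ 𝓝 σ).NeBot := by
      have h3 : (𝓝 σ ⊓ Filter.map τq l).NeBot := hσ
      rwa [inf_comm] at h3
    rw [← Filter.push_pull] at h2
    exact h2.of_map
  obtain ⟨t₀, γ⟩ := p
  have hγlip : LipschitzWith C γ := hp
  have hlp : l' ≤ 𝓝 (t₀, γ) :=
    le_trans inf_le_left (le_trans inf_le_left nhdsWithin_le_nhds)
  have h1 : Tendsto (fun q : NNReal × C(NNReal, X) => q.1) l' (𝓝 t₀) :=
    (continuous_fst.tendsto _).mono_left hlp
  have h2 : Tendsto (fun q : NNReal × C(NNReal, X) => q.2) l' (𝓝 γ) :=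
    (continuous_snd.tendsto _).mono_left hlp
  have h3 : Tendsto τq l' (𝓝 σ) := Filter.tendsto_iff_comap.2 inf_le_right
  set a : NNReal := σ.toNNReal with hadef
  have h4 : Tendsto (fun q => (τq q).toNNReal) l' (𝓝 a) :=
    (ENNReal.tendsto_toNNReal hσtop).comp h3
  have h5 : Tendsto (fun q : NNReal × C(NNReal, X) => q.1 + (τq q).toNNReal) l'
      (𝓝 (t₀ + a)) := h1.add h4
  have h6 : Tendsto (fun q : NNReal × C(NNReal, X) => q.2 (q.1 + (τq q).toNNReal)) l'
      (𝓝 (γ (t₀ + a))) := by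
    have hev : Continuous fun z : C(NNReal, X) × NNReal => z.1 z.2 := continuous_eval
    exact (hev.tendsto (γ, t₀ + a)).comp (h2.prodMk_nhds h5)
  have hev' : ∀ᶠ q in l', q.2 (q.1 + (τq q).toNNReal) ∈ Γ ∧
      τq q + ENNReal.ofReal (g (q.2 (q.1 + (τq q).toNNReal))) ≤ b := by
    filter_upwards [hτfin.filter_mono inf_le_left] with q hq
    exact ⟨exitTime_mem hΓ hq.1, hq.2⟩
  have hxΓ : γ (t₀ + a) ∈ Γ := hΓ.mem_of_tendsto h6 (hev'.mono fun q h => h.1)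
  have hgc : Tendsto (fun q : NNReal × C(NNReal, X) => g (q.2 (q.1 + (τq q).toNNReal))) l'
      (𝓝 (g (γ (t₀ + a)))) := by
    have hcw : ContinuousWithinAt g Γ (γ (t₀ + a)) := hg.continuousOn _ hxΓ
    exact hcw.tendsto.comp (tendsto_nhdsWithin_iff.2 ⟨h6, hev'.mono fun q h => h.1⟩)
  have hlim : Tendsto (fun q : NNReal × C(NNReal, X) =>
      τq q + ENNReal.ofReal (g (q.2 (q.1 + (τq q).toNNReal)))) l'
      (𝓝 (σ + ENNReal.ofReal (g (γ (t₀ + a))))) :=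
    h3.add ((ENNReal.continuous_ofReal.tendsto _).comp hgc)
  have hkey : σ + ENNReal.ofReal (g (γ (t₀ + a))) ≤ b :=
    le_of_tendsto hlim (hev'.mono fun q h => h.2)
  -- now compare with the exit cost at the base point
  set τ₀ : ENNReal := exitTime Γ γ t₀ with hτ₀def
  have hτ₀σ : τ₀ ≤ σ := by
    have hmem : γ (a + t₀) ∈ Γ := by rwa [add_comm]
    calc τ₀ ≤ (a : ENNReal) := sInf_le ⟨a, rfl, hmem⟩
      _ = σ := ENNReal.coe_toNNReal hσtop
  have hτ₀top : τ₀ ≠ ⊤ := (hτ₀σ.trans_lt (lt_top_iff_ne_top.2 hσtop)).ne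
  set c : NNReal := τ₀.toNNReal with hcdef
  have hca : c ≤ a := (ENNReal.toNNReal_le_toNNReal hτ₀top hσtop).2 hτ₀σ
  have hmemc : γ (t₀ + c) ∈ Γ := exitTime_mem hΓ hτ₀top
  have hacnonneg : (0 : ℝ) ≤ (a : ℝ) - c := sub_nonneg.2 (by exact_mod_cast hca)
  have hdistt : dist (t₀ + c) (t₀ + a) = (a : ℝ) - c := by
    rw [NNReal.dist_eq]
    push_cast
    rw [abs_of_nonpos (by linarith)]
    ring
  have hdist : dist (γ (t₀ + c)) (γ (t₀ + a)) ≤ (C : ℝ) * ((a : ℝ) - c) := by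
    have h7 := hγlip.dist_le_mul (t₀ + c) (t₀ + a)
    rwa [hdistt] at h7
  have hgle : g (γ (t₀ + c)) ≤ g (γ (t₀ + a)) + ((a : ℝ) - c) := by
    have f1 : g (γ (t₀ + c)) - g (γ (t₀ + a)) ≤ dist (g (γ (t₀ + c))) (g (γ (t₀ + a))) :=
      (le_abs_self _).trans_eq (Real.dist_eq _ _).symm
    have f2 : dist (g (γ (t₀ + c))) (g (γ (t₀ + a))) ≤
        (Lg : ℝ) * dist (γ (t₀ + c)) (γ (t₀ + a)) := hg.dist_le_mul _ hmemc _ hxΓ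
    have f3 : (0 : ℝ) ≤ (Lg : ℝ) := Lg.coe_nonneg
    nlinarith [dist_nonneg (x := γ (t₀ + c)) (y := γ (t₀ + a))]
  have hτ₀c : τ₀ = ((c : NNReal) : ENNReal) := (ENNReal.coe_toNNReal hτ₀top).symm
  have e1 : ENNReal.ofReal ((a : ℝ) - c) = ((a - c : NNReal) : ENNReal) := by
    rw [← NNReal.coe_sub hca, ENNReal.ofReal_coe_nnreal]
  have hfinal : exitCost Γ g t₀ γ ≤ b := by
    rw [exitCost, dif_pos hτ₀top]
    calc exitTime Γ γ t₀ + ENNReal.ofReal (g (γ (t₀ + (exitTime Γ γ t₀).toNNReal)))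
        = (c : ENNReal) + ENNReal.ofReal (g (γ (t₀ + c))) := by rw [← hτ₀def, hτ₀c, ENNReal.toNNReal_coe]
      _ ≤ (c : ENNReal) + (ENNReal.ofReal (g (γ (t₀ + a))) + ENNReal.ofReal ((a : ℝ) - c)) := by
          gcongr
          calc ENNReal.ofReal (g (γ (t₀ + c)))
              ≤ ENNReal.ofReal (g (γ (t₀ + a)) + ((a : ℝ) - c)) :=
                ENNReal.ofReal_le_ofReal hgle
            _ ≤ _ := ENNReal.ofReal_add_le
      _ = ((c : ENNReal) + ((a - c : NNReal) : ENNReal)) + ENNReal.ofReal (g (γ (t₀ + a))) := by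
          rw [e1]; ring
      _ = σ + ENNReal.ofReal (g (γ (t₀ + a))) := by
          rw [← ENNReal.coe_add, add_tsub_cancel_of_le hca, ENNReal.coe_toNNReal hσtop]
      _ ≤ b := hkey
  exact absurd hfinal (not_le.2 hb)
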